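/- Let g: ℝ^p → (−∞, ∞] be a proper lower semicontinuous convex function that is block separable over a partition ℬ of the coordinates, i.e., g(x) = ∑_{B∈ℬ} g_B([x]_B). Let x, x̃ ∈ ℝ^p, γ > 0, and set z = prox_{γg}(x), z̃ = prox_{γg}(x̃). Then for any subset 𝒜 ⊆ ℬ of blocks, ⟨[z − z̃]_𝒜, [x − x̃]_𝒜⟩ ≥ ‖[z − z̃]_𝒜‖², where [v]_𝒜 denotes the restriction of v to the coordinates in the blocks of 𝒜. -/

import Mathlib

open Finset
open scoped RealInnerProductSpace

noncomputable section

variable {p : ℕ}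

/-- proper, lower semicontinuous, convex extended-real function. -/
structure ProperLscConvex (g : EuclideanSpace ℝ (Fin p) → EReal) : Prop where
  proper : ∃ x, g x ≠ ⊤
  ne_bot : ∀ x, g x ≠ ⊥
  lsc : LowerSemicontinuous g
  convex : ∀ x y : EuclideanSpace ℝ (Fin p), ∀ a b : ℝ, 0 ≤ a → 0 ≤ b → a + b = 1 →
    g (a • x + b • y) ≤ (a : EReal) * g x + (b : EReal) * g y

/-- `z = prox_{γ g}(x)`: `z` minimizes `w ↦ g(w) + (1/(2γ)) ‖x − w‖²`. -/
def IsProx (γ : ℝ) (g : EuclideanSpace ℝ (Fin p) → EReal) (x z : EuclideanSpace ℝ (Fin p)) : Prop :=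
  ∀ w, g z + (((1 / (2 * γ)) * ‖x - z‖ ^ 2 : ℝ) : EReal)
      ≤ g w + (((1 / (2 * γ)) * ‖x - w‖ ^ 2 : ℝ) : EReal)

/- ### Auxiliary lemmas -/

lemma ereal_sum_ne_bot {ι : Type*} (s : Finset ι) (f : ι → EReal) (h : ∀ b ∈ s, f b ≠ ⊥) :
    ∑ b ∈ s, f b ≠ ⊥ := by
  induction s using Finset.cons_induction with
  | empty => simp
  | cons a s ha ih =>
    rw [Finset.sum_cons]
    simp only [ne_eq, EReal.add_eq_bot_iff, not_or]
    exact ⟨h a (Finset.mem_cons_self a s), ih fun b hb => h b (Finset.mem_cons_of_mem hb)⟩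

lemma ereal_term_finite {ι : Type*} [DecidableEq ι] (s : Finset ι) (f : ι → EReal)
    (hnt : ∑ b ∈ s, f b ≠ ⊤) (hnb : ∑ b ∈ s, f b ≠ ⊥) (b : ι) (hb : b ∈ s) :
    ∃ rb : ℝ, f b = (rb : EReal) := by
  have hbot : ∀ c ∈ s, f c ≠ ⊥ := by
    intro c hc hcb
    exact hnb (by rw [← Finset.add_sum_erase s f hc, hcb, EReal.bot_add])
  have htop : f b ≠ ⊤ := by
    intro hbt
    apply hnt
    rw [← Finset.add_sum_erase s f hb, hbt]
    exact EReal.top_add_of_ne_bot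
      (ereal_sum_ne_bot _ _ fun c hc => hbot c (Finset.mem_of_mem_erase hc))
  exact ⟨(f b).toReal, (EReal.coe_toReal htop (hbot b hb)).symm⟩

lemma prox_val_ne_top {g : EuclideanSpace ℝ (Fin p) → EReal} (hg : ProperLscConvex g)
    {γ : ℝ} {x z : EuclideanSpace ℝ (Fin p)} (hz : IsProx γ g x z) : g z ≠ ⊤ := by
  obtain ⟨x₀, hx₀⟩ := hg.proper
  intro h
  have hm := hz x₀
  rw [h] at hm
  lift g x₀ to ℝ using ⟨hx₀, hg.ne_bot x₀⟩ with a
  rw [← EReal.coe_add, EReal.top_add_coe] at hm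
  exact absurd hm (not_le.mpr (EReal.coe_lt_top _))

lemma aux_le_of_forall {a b K : ℝ} (hK : 0 ≤ K) (h : ∀ t : ℝ, 0 < t → t < 1 → a ≤ b + t * K) :
    a ≤ b := by
  by_contra hc
  push_neg at hc
  set ε := a - b with hε
  have hε0 : 0 < ε := by simp [hε]; linarith
  have ht0 : (0:ℝ) < min (ε / (2 * (K + 1))) (1/2) :=
    lt_min (by positivity) (by norm_num)
  have ht1 : min (ε / (2 * (K + 1))) (1/2) < 1 :=
    lt_of_le_of_lt (min_le_right _ _) (by norm_num)
  have := h _ ht0 ht1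
  have hle : min (ε / (2 * (K + 1))) (1/2) * K ≤ ε / (2 * (K + 1)) * K :=
    mul_le_mul_of_nonneg_right (min_le_left _ _) hK
  have h2 : ε / (2 * (K + 1)) * K < ε := by
    rw [div_mul_eq_mul_div, div_lt_iff₀ (by positivity)]
    nlinarith
  linarith

lemma combo_norm {E : Type*} [NormedAddCommGroup E] [InnerProductSpace ℝ E] (a b : E) (t : ℝ) :
    ‖(1 - t) • a + t • b‖ ^ 2 = (1 - t) * ‖a‖ ^ 2 + t * ‖b‖ ^ 2 - t * (1 - t) * ‖a - b‖ ^ 2 := by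
  rw [← real_inner_self_eq_norm_sq, ← real_inner_self_eq_norm_sq, ← real_inner_self_eq_norm_sq,
    ← real_inner_self_eq_norm_sq]
  simp only [inner_add_left, inner_add_right, inner_sub_left, inner_sub_right,
    real_inner_smul_left, real_inner_smul_right]
  rw [real_inner_comm b a]
  ring

/-- Strengthened prox inequality (strong convexity of the quadratic part). -/
lemma prox_strong {g : EuclideanSpace ℝ (Fin p) → EReal}
    (hconv : ∀ x y : EuclideanSpace ℝ (Fin p), ∀ a b : ℝ, 0 ≤ a → 0 ≤ b → a + b = 1 →
      g (a • x + b • y) ≤ (a : EReal) * g x + (b : EReal) * g y)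
    {γ : ℝ} (hγ : 0 < γ) {x z w : EuclideanSpace ℝ (Fin p)} (hz : IsProx γ g x z)
    {r s : ℝ} (hr : g z = (r : EReal)) (hs : g w = (s : EReal)) :
    r + (1 / (2 * γ)) * ‖x - z‖ ^ 2 + (1 / (2 * γ)) * ‖w - z‖ ^ 2
      ≤ s + (1 / (2 * γ)) * ‖x - w‖ ^ 2 := by
  set c : ℝ := 1 / (2 * γ) with hc
  have hc0 : 0 < c := by positivity
  have key : ∀ t : ℝ, 0 < t → t < 1 →
      r + c * ‖x - z‖ ^ 2 + c * ‖w - z‖ ^ 2 ≤ s + c * ‖x - w‖ ^ 2 + t * (c * ‖w - z‖ ^ 2) := by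
    intro t ht0 ht1
    have hm := hz ((1 - t) • z + t • w)
    have hgm := hconv z w (1 - t) t (by linarith) ht0.le (by ring)
    rw [hr, hs] at hgm
    rw [hr] at hm
    have hmm : g ((1 - t) • z + t • w) + ((c * ‖x - ((1 - t) • z + t • w)‖ ^ 2 : ℝ) : EReal)
        ≤ ((((1 - t) * r + t * s) + c * ‖x - ((1 - t) • z + t • w)‖ ^ 2 : ℝ) : EReal) := by
      rw [EReal.coe_add, EReal.coe_add, EReal.coe_mul, EReal.coe_mul, EReal.coe_mul]
      exact add_le_add hgm le_rfl
    have hchain := le_trans hm hmm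
    rw [← EReal.coe_add, EReal.coe_le_coe_iff] at hchain
    have hxm : x - ((1 - t) • z + t • w) = (1 - t) • (x - z) + t • (x - w) := by
      module
    have hab : (x - z) - (x - w) = w - z := by abel
    have hid : ‖x - ((1 - t) • z + t • w)‖ ^ 2
        = (1 - t) * ‖x - z‖ ^ 2 + t * ‖x - w‖ ^ 2 - t * (1 - t) * ‖w - z‖ ^ 2 := by
      rw [hxm, combo_norm, hab]
    rw [hid] at hchain
    have h3 : 0 ≤ t * ((s + c * ‖x - w‖ ^ 2 + t * (c * ‖w - z‖ ^ 2))
        - (r + c * ‖x - z‖ ^ 2 + c * ‖w - z‖ ^ 2)) := by nlinarith [hchain]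
    nlinarith [h3, ht0]
  exact aux_le_of_forall (by positivity) key

lemma euclid_norm_sq_eq_sum (v : EuclideanSpace ℝ (Fin p)) : ‖v‖ ^ 2 = ∑ j, (v j) ^ 2 := by
  rw [EuclideanSpace.norm_sq_eq]
  simp [Real.norm_eq_abs, sq_abs]

/-- block firm nonexpansiveness.  If `g` is proper lsc convex and block
separable over a partition `ℬ` of the coordinates (encoded by a block map `blk : Fin p → Bk`,
with `g = ∑_{b} g_b` where each `g_b` only depends on the coordinates of block `b`), then for
`z = prox_{γg}(x)`, `z̃ = prox_{γg}(x̃)` and any subset `𝒜` of blocks,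
`⟨[z − z̃]_𝒜, [x − x̃]_𝒜⟩ ≥ ‖[z − z̃]_𝒜‖²`. -/
theorem block_firm_nonexpansiveness
    {Bk : Type} [Fintype Bk] [DecidableEq Bk] (blk : Fin p → Bk)
    (g : EuclideanSpace ℝ (Fin p) → EReal) (hg : ProperLscConvex g)
    (gB : Bk → EuclideanSpace ℝ (Fin p) → EReal)
    (hgB_block : ∀ b x y, (∀ j, blk j = b → x j = y j) → gB b x = gB b y)
    (hgsum : ∀ x, g x = ∑ b, gB b x)
    (γ : ℝ) (hγ : 0 < γ)
    (x xtil z ztil : EuclideanSpace ℝ (Fin p))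
    (hz : IsProx γ g x z) (hztil : IsProx γ g xtil ztil)
    (A : Finset Bk) :
    ∑ j ∈ univ.filter (fun j : Fin p => blk j ∈ A), (z j - ztil j) * (x j - xtil j)
      ≥ ∑ j ∈ univ.filter (fun j : Fin p => blk j ∈ A), (z j - ztil j) ^ 2 := by
  classical
  set c : ℝ := 1 / (2 * γ) with hc
  have hc0 : 0 < c := by positivity
  -- finite per-block values at z and ztil
  have hRz : ∀ b : Bk, ∃ rb : ℝ, gB b z = (rb : EReal) := fun b =>
    ereal_term_finite univ _ (by rw [← hgsum]; exact prox_val_ne_top hg hz)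
      (by rw [← hgsum]; exact hg.ne_bot z) b (mem_univ b)
  choose Rz hRz using hRz
  have hRzt : ∀ b : Bk, ∃ rb : ℝ, gB b ztil = (rb : EReal) := fun b =>
    ereal_term_finite univ _ (by rw [← hgsum]; exact prox_val_ne_top hg hztil)
      (by rw [← hgsum]; exact hg.ne_bot ztil) b (mem_univ b)
  choose Rzt hRzt using hRzt
  -- competitor points
  set w : EuclideanSpace ℝ (Fin p) := WithLp.toLp 2 (fun j => if blk j ∈ A then ztil j else z j) with hw
  set wt : EuclideanSpace ℝ (Fin p) := WithLp.toLp 2 (fun j => if blk j ∈ A then z j else ztil j) with hwt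
  have coe_sum : ∀ f : Bk → ℝ, ((∑ b, f b : ℝ) : EReal) = ∑ b, ((f b : ℝ) : EReal) := fun f =>
    map_sum (⟨⟨Real.toEReal, EReal.coe_zero⟩, EReal.coe_add⟩ : ℝ →+ EReal) f univ
  have hgBw : ∀ b, gB b w = ((if b ∈ A then Rzt b else Rz b : ℝ) : EReal) := by
    intro b
    by_cases hb : b ∈ A
    · rw [if_pos hb, ← hRzt b]
      exact hgB_block b w ztil fun j hj => by simp [hw, hj, hb]
    · rw [if_neg hb, ← hRz b]
      exact hgB_block b w z fun j hj => by simp [hw, hj, hb]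
  have hgBwt : ∀ b, gB b wt = ((if b ∈ A then Rz b else Rzt b : ℝ) : EReal) := by
    intro b
    by_cases hb : b ∈ A
    · rw [if_pos hb, ← hRz b]
      exact hgB_block b wt z fun j hj => by simp [hwt, hj, hb]
    · rw [if_neg hb, ← hRzt b]
      exact hgB_block b wt ztil fun j hj => by simp [hwt, hj, hb]
  have hgz : g z = ((∑ b, Rz b : ℝ) : EReal) := by
    rw [hgsum, coe_sum]; exact Finset.sum_congr rfl fun b _ => hRz b
  have hgzt : g ztil = ((∑ b, Rzt b : ℝ) : EReal) := by
    rw [hgsum, coe_sum]; exact Finset.sum_congr rfl fun b _ => hRzt b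
  have hgw : g w = ((∑ b, if b ∈ A then Rzt b else Rz b : ℝ) : EReal) := by
    rw [hgsum, coe_sum]; exact Finset.sum_congr rfl fun b _ => hgBw b
  have hgwt : g wt = ((∑ b, if b ∈ A then Rz b else Rzt b : ℝ) : EReal) := by
    rw [hgsum, coe_sum]; exact Finset.sum_congr rfl fun b _ => hgBwt b
  have hIII : (∑ b, if b ∈ A then Rzt b else Rz b) + (∑ b, if b ∈ A then Rz b else Rzt b)
      = (∑ b, Rz b) + (∑ b, Rzt b) := by
    rw [← Finset.sum_add_distrib, ← Finset.sum_add_distrib]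
    exact Finset.sum_congr rfl fun b _ => by by_cases hb : b ∈ A <;> simp [hb] <;> ring
  have hI := prox_strong hg.convex hγ hz hgz hgw
  have hII := prox_strong hg.convex hγ hztil hgzt hgwt
  rw [← hc] at hI hII
  -- rewrite norms as coordinate sums, splitting over the blocks in A
  set S : Finset (Fin p) := univ.filter (fun j : Fin p => blk j ∈ A) with hS
  have hsplit : ∀ f : Fin p → ℝ,
      ∑ j, f j = ∑ j ∈ S, f j + ∑ j ∈ univ.filter (fun j : Fin p => blk j ∉ A), f j := by
    intro f
    rw [hS]
    exact (Finset.sum_filter_add_sum_filter_not univ _ f).symm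
  have hnorm : ∀ (u v : EuclideanSpace ℝ (Fin p)),
      ‖u - v‖ ^ 2 = ∑ j ∈ S, (u j - v j) ^ 2
        + ∑ j ∈ univ.filter (fun j : Fin p => blk j ∉ A), (u j - v j) ^ 2 := by
    intro u v
    rw [euclid_norm_sq_eq_sum, ← hsplit]
    exact Finset.sum_congr rfl fun j _ => by rw [PiLp.sub_apply]
  have hmemS : ∀ j ∈ S, blk j ∈ A := fun j hj => (mem_filter.mp hj).2
  have hmemN : ∀ j ∈ univ.filter (fun j : Fin p => blk j ∉ A), blk j ∉ A :=
    fun j hj => (mem_filter.mp hj).2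
  have e1 : ‖x - w‖ ^ 2 = ∑ j ∈ S, (x j - ztil j) ^ 2
      + ∑ j ∈ univ.filter (fun j : Fin p => blk j ∉ A), (x j - z j) ^ 2 := by
    rw [hnorm]
    congr 1
    · exact Finset.sum_congr rfl fun j hj => by simp [hw, hmemS j hj]
    · exact Finset.sum_congr rfl fun j hj => by simp [hw, hmemN j hj]
  have e2 : ‖x - z‖ ^ 2 = ∑ j ∈ S, (x j - z j) ^ 2
      + ∑ j ∈ univ.filter (fun j : Fin p => blk j ∉ A), (x j - z j) ^ 2 := hnorm x z
  have e3 : ‖xtil - wt‖ ^ 2 = ∑ j ∈ S, (xtil j - z j) ^ 2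
      + ∑ j ∈ univ.filter (fun j : Fin p => blk j ∉ A), (xtil j - ztil j) ^ 2 := by
    rw [hnorm]
    congr 1
    · exact Finset.sum_congr rfl fun j hj => by simp [hwt, hmemS j hj]
    · exact Finset.sum_congr rfl fun j hj => by simp [hwt, hmemN j hj]
  have e4 : ‖xtil - ztil‖ ^ 2 = ∑ j ∈ S, (xtil j - ztil j) ^ 2
      + ∑ j ∈ univ.filter (fun j : Fin p => blk j ∉ A), (xtil j - ztil j) ^ 2 := hnorm xtil ztil
  have e5 : ‖w - z‖ ^ 2 = ∑ j ∈ S, (z j - ztil j) ^ 2 := by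
    rw [hnorm]
    have h0 : ∑ j ∈ univ.filter (fun j : Fin p => blk j ∉ A), (w j - z j) ^ 2 = 0 := by
      apply Finset.sum_eq_zero
      intro j hj
      simp [hw, hmemN j hj]
    rw [h0, add_zero]
    exact Finset.sum_congr rfl fun j hj => by
      simp only [hw, PiLp.toLp_apply, if_pos (hmemS j hj)]
      ring
  have e6 : ‖wt - ztil‖ ^ 2 = ∑ j ∈ S, (z j - ztil j) ^ 2 := by
    rw [hnorm]
    have h0 : ∑ j ∈ univ.filter (fun j : Fin p => blk j ∉ A), (wt j - ztil j) ^ 2 = 0 := by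
      apply Finset.sum_eq_zero
      intro j hj
      simp [hwt, hmemN j hj]
    rw [h0, add_zero]
    exact Finset.sum_congr rfl fun j hj => by
      simp only [hwt, PiLp.toLp_apply, if_pos (hmemS j hj)]
  rw [e1, e2, e5] at hI
  rw [e3, e4, e6] at hII
  have hmain : c * ((∑ j ∈ S, (x j - z j) ^ 2) + (∑ j ∈ S, (xtil j - ztil j) ^ 2)
        + 2 * ∑ j ∈ S, (z j - ztil j) ^ 2)
      ≤ c * ((∑ j ∈ S, (x j - ztil j) ^ 2) + (∑ j ∈ S, (xtil j - z j) ^ 2)) := by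
    nlinarith [hI, hII, hIII]
  have hmain2 := (mul_le_mul_iff_right₀ hc0).mp hmain
  have hcross : (∑ j ∈ S, (x j - ztil j) ^ 2) + (∑ j ∈ S, (xtil j - z j) ^ 2)
      - (∑ j ∈ S, (x j - z j) ^ 2) - (∑ j ∈ S, (xtil j - ztil j) ^ 2)
      = 2 * ∑ j ∈ S, (z j - ztil j) * (x j - xtil j) := by
    rw [Finset.mul_sum, ← Finset.sum_add_distrib, ← Finset.sum_sub_distrib,
      ← Finset.sum_sub_distrib]
    exact Finset.sum_congr rfl fun j _ => by ring
  linarith [hmain2, hcross]
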